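/- The nuclear norm of Y ∈ ℝ^{n×m} satisfies the SDP characterization: ‖Y‖_* equals the minimum of (1/2)(trace(W₁) + trace(W₂)) over symmetric W₁ ∈ ℝ^{m×m}, W₂ ∈ ℝ^{n×n} such that the block matrix [[W₁, Yᵀ],[Y, W₂]] is positive semidefinite. -/

import Mathlib

open Matrix BigOperators

section AuxNuclear

variable {k : Type*} [Fintype k] [DecidableEq k]

lemma aux_conjTranspose_eq_transpose {p q : Type*} (A : Matrix p q ℝ) : Aᴴ = Aᵀ := by
  ext i j; simp [Matrix.conjTranspose_apply]

lemma aux_trace_nonneg {A : Matrix k k ℝ} (hA : A.PosSemidef) : 0 ≤ A.trace := by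
  rw [Matrix.trace]
  apply Finset.sum_nonneg
  intro i _
  exact hA.diag_nonneg

open scoped MatrixOrder in
lemma aux_trace_mul_nonneg {A B : Matrix k k ℝ} (hA : A.PosSemidef) (hB : B.PosSemidef) :
    0 ≤ (A * B).trace := by
  have h2 : (A * B).trace = ((CFC.sqrt A) * B * (CFC.sqrt A)).trace := by
    conv_lhs => rw [← CFC.sqrt_mul_sqrt_self A hA.nonneg]
    rw [Matrix.mul_assoc, Matrix.trace_mul_comm]
  rw [h2]
  have h3 : ((CFC.sqrt A) * B * (CFC.sqrt A)ᴴ).PosSemidef := hB.mul_mul_conjTranspose_same _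
  rw [(CFC.sqrt_nonneg A).posSemidef.isHermitian.eq] at h3
  exact aux_trace_nonneg h3

end AuxNuclear

/-- SDP characterization of the nuclear norm: `‖Y‖_*` (the sum of the singular values of
`Y`, i.e. of the square roots of the eigenvalues of `YᵀY`) is the minimum of
`(1/2)(tr W₁ + tr W₂)` over symmetric `W₁, W₂` making `[[W₁, Yᵀ],[Y, W₂]]` positive
semidefinite; the minimum is attained. -/
theorem nuclear_norm_sdp_characterization
    (n m : ℕ) (hn : 0 < n) (hm : 0 < m)
    (Y : Matrix (Fin n) (Fin m) ℝ)
    (hY : (Yᵀ * Y).IsHermitian) :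
    IsLeast
      {t : ℝ | ∃ (W₁ : Matrix (Fin m) (Fin m) ℝ) (W₂ : Matrix (Fin n) (Fin n) ℝ),
        W₁.IsSymm ∧ W₂.IsSymm ∧ (Matrix.fromBlocks W₁ Yᵀ Y W₂).PosSemidef ∧
        t = (W₁.trace + W₂.trace) / 2}
      (∑ i, Real.sqrt (hY.eigenvalues i)) := by
  classical
  set V : Matrix (Fin m) (Fin m) ℝ := (hY.eigenvectorUnitary : Matrix (Fin m) (Fin m) ℝ) with hVdef
  set lam : Fin m → ℝ := hY.eigenvalues with hlamdef
  set σ : Fin m → ℝ := fun i => Real.sqrt (lam i) with hσdef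
  have hgoal : (∑ i, Real.sqrt (lam i)) = ∑ i, σ i := by simp [hσdef]
  rw [hgoal]
  have hstar : star (hY.eigenvectorUnitary : Matrix (Fin m) (Fin m) ℝ) = Vᵀ := by
    rw [Matrix.star_eq_conjTranspose, aux_conjTranspose_eq_transpose]
  have hVVt : V * Vᵀ = 1 := by
    have := (Matrix.mem_unitaryGroup_iff).mp hY.eigenvectorUnitary.2
    rwa [hstar] at this
  have hVtV : Vᵀ * V = 1 := by
    have := (Matrix.mem_unitaryGroup_iff').mp hY.eigenvectorUnitary.2
    rwa [hstar] at this
  have hlam_nonneg : ∀ i, 0 ≤ lam i := fun i =>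
    (Matrix.posSemidef_conjTranspose_mul_self Y).eigenvalues_nonneg i
  have hσ_nonneg : ∀ i, 0 ≤ σ i := fun i => Real.sqrt_nonneg _
  have hσσ : ∀ i, σ i * σ i = lam i := fun i => Real.mul_self_sqrt (hlam_nonneg i)
  have hlam_zero : ∀ i, σ i = 0 → lam i = 0 := by
    intro i h; rw [← hσσ i, h, mul_zero]
  have hdiag : Vᵀ * (Yᵀ * Y) * V = Matrix.diagonal lam := by
    have := hY.conjStarAlgAut_star_eigenvectorUnitary
    simp only [Unitary.conjStarAlgAut_apply, Unitary.coe_star, star_star] at this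
    rw [hstar] at this
    simpa using this
  have hspec : Yᵀ * Y * V = V * Matrix.diagonal lam := by
    calc Yᵀ * Y * V = (V * Vᵀ) * (Yᵀ * Y) * V := by rw [hVVt, Matrix.one_mul]
    _ = V * (Vᵀ * (Yᵀ * Y) * V) := by simp only [Matrix.mul_assoc]
    _ = V * Matrix.diagonal lam := by rw [hdiag]
  set U : Matrix (Fin n) (Fin m) ℝ := Y * V * Matrix.diagonal (fun i => (σ i)⁻¹) with hUdef
  set e : Fin m → ℝ := fun i => (σ i)⁻¹ * σ i with hedef
  have hlaminv : ∀ i, lam i * (σ i)⁻¹ = σ i := by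
    intro i
    rcases eq_or_ne (σ i) 0 with h | h
    · rw [hlam_zero i h, h, zero_mul]
    · rw [← hσσ i]; field_simp
  have hYtU : Yᵀ * U = V * Matrix.diagonal σ := by
    rw [hUdef, ← Matrix.mul_assoc, ← Matrix.mul_assoc, hspec, Matrix.mul_assoc,
      Matrix.diagonal_mul_diagonal]
    exact congrArg _ (congrArg _ (funext hlaminv))
  have hUt : Uᵀ = Matrix.diagonal (fun i => (σ i)⁻¹) * Vᵀ * Yᵀ := by
    rw [hUdef, Matrix.transpose_mul, Matrix.transpose_mul, Matrix.diagonal_transpose,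
      Matrix.mul_assoc]
  have hVtYt : Vᵀ * (Yᵀ * (Y * V)) = Matrix.diagonal lam := by
    rw [← hdiag]; simp only [Matrix.mul_assoc]
  have hUtU : Uᵀ * U = Matrix.diagonal e := by
    rw [hUt, hUdef]
    calc Matrix.diagonal (fun i => (σ i)⁻¹) * Vᵀ * Yᵀ *
          (Y * V * Matrix.diagonal fun i => (σ i)⁻¹)
        = Matrix.diagonal (fun i => (σ i)⁻¹) * (Vᵀ * (Yᵀ * (Y * V))) *
          Matrix.diagonal (fun i => (σ i)⁻¹) := by simp only [Matrix.mul_assoc]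
      _ = Matrix.diagonal (fun i => (σ i)⁻¹) * Matrix.diagonal lam *
          Matrix.diagonal (fun i => (σ i)⁻¹) := by rw [hVtYt]
      _ = Matrix.diagonal e := by
          rw [Matrix.diagonal_mul_diagonal, Matrix.diagonal_mul_diagonal]
          have h9 : (fun i => (σ i)⁻¹ * lam i * (σ i)⁻¹) = e := by
            funext i
            rw [mul_assoc, hlaminv i, hedef]
          rw [h9]
  -- Y * V * diagonal e = Y * V
  have hYVE : Y * V * Matrix.diagonal e = Y * V := by
    have hsub : (Matrix.diagonal e - 1 : Matrix (Fin m) (Fin m) ℝ)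
        = Matrix.diagonal (fun i => e i - 1) := by
      rw [← Matrix.diagonal_one, Matrix.diagonal_sub]
    have key : Vᵀ * (Yᵀ * (Y * (V * Matrix.diagonal (fun i => e i - 1))))
        = Matrix.diagonal (fun i => lam i * (e i - 1)) := by
      have h := congrArg (· * Matrix.diagonal (fun i => e i - 1)) hVtYt
      simp only [Matrix.mul_assoc] at h
      rw [h, Matrix.diagonal_mul_diagonal]
    have hz : (Y * V * (Matrix.diagonal e - 1))ᴴ * (Y * V * (Matrix.diagonal e - 1)) = 0 := by
      rw [aux_conjTranspose_eq_transpose, hsub, Matrix.transpose_mul, Matrix.transpose_mul,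
        Matrix.diagonal_transpose]
      calc Matrix.diagonal (fun i => e i - 1) * (Vᵀ * Yᵀ) *
            (Y * V * Matrix.diagonal (fun i => e i - 1))
          = Matrix.diagonal (fun i => e i - 1) *
            (Vᵀ * (Yᵀ * (Y * (V * Matrix.diagonal (fun i => e i - 1))))) := by
            simp only [Matrix.mul_assoc]
        _ = Matrix.diagonal (fun i => e i - 1) *
            Matrix.diagonal (fun i => lam i * (e i - 1)) := by rw [key]
        _ = Matrix.diagonal (fun i => (e i - 1) * (lam i * (e i - 1))) := by
            rw [Matrix.diagonal_mul_diagonal]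
        _ = 0 := by
            have : (fun i => (e i - 1) * (lam i * (e i - 1))) = fun _ => (0 : ℝ) := by
              funext i
              rcases eq_or_ne (σ i) 0 with h | h
              · rw [hlam_zero i h]; ring
              · have : e i = 1 := by rw [hedef]; exact inv_mul_cancel₀ h
                rw [this]; ring
            rw [this, Matrix.diagonal_zero]
    have h0 : Y * V * (Matrix.diagonal e - 1) = 0 :=
      Matrix.conjTranspose_mul_self_eq_zero.mp hz
    rw [Matrix.mul_sub, Matrix.mul_one] at h0
    exact sub_eq_zero.mp h0
  have hUE : U * Matrix.diagonal e = U := by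
    rw [hUdef, Matrix.mul_assoc, Matrix.diagonal_mul_diagonal]
    have h1 : (fun i => (σ i)⁻¹ * e i) = fun i => e i * (σ i)⁻¹ := by funext i; ring
    rw [h1, ← Matrix.diagonal_mul_diagonal, ← Matrix.mul_assoc, hYVE]
  -- key identities for the witness
  have hUDVt : U * Matrix.diagonal σ * Vᵀ = Y := by
    rw [hUdef, Matrix.mul_assoc (Y * V), Matrix.diagonal_mul_diagonal]
    have : (fun i => (σ i)⁻¹ * σ i) = e := by rw [hedef]
    rw [this, hYVE, Matrix.mul_assoc, hVVt, Matrix.mul_one]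
  have hVDUt : V * Matrix.diagonal σ * Uᵀ = Yᵀ := by
    have h := congrArg Matrix.transpose hUDVt
    rw [Matrix.transpose_mul, Matrix.transpose_mul, Matrix.diagonal_transpose,
      Matrix.transpose_transpose] at h
    rw [Matrix.mul_assoc]
    exact h
  have tr1 : (V * Matrix.diagonal σ * Vᵀ).trace = ∑ i, σ i := by
    rw [Matrix.trace_mul_cycle, hVtV, Matrix.one_mul, Matrix.trace_diagonal]
  have hEσ : ∀ i, e i * σ i = σ i := by
    intro i
    rcases eq_or_ne (σ i) 0 with h | h
    · rw [h, mul_zero]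
    · rw [hedef]; field_simp
  have tr2 : (U * Matrix.diagonal σ * Uᵀ).trace = ∑ i, σ i := by
    rw [Matrix.trace_mul_cycle, hUtU, Matrix.diagonal_mul_diagonal, Matrix.trace_diagonal]
    exact Finset.sum_congr rfl fun i _ => hEσ i
  constructor
  · -- membership
    refine ⟨V * Matrix.diagonal σ * Vᵀ, U * Matrix.diagonal σ * Uᵀ, ?_, ?_, ?_, ?_⟩
    · rw [Matrix.IsSymm]
      simp [Matrix.transpose_mul, Matrix.mul_assoc]
    · rw [Matrix.IsSymm]
      simp [Matrix.transpose_mul, Matrix.mul_assoc]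
    · have hDps : (Matrix.diagonal σ).PosSemidef := Matrix.posSemidef_diagonal_iff.mpr hσ_nonneg
      have hps := hDps.mul_mul_conjTranspose_same (Matrix.fromRows V U)
      rw [aux_conjTranspose_eq_transpose, Matrix.transpose_fromRows, Matrix.fromRows_mul,
        Matrix.fromRows_mul_fromCols] at hps
      rw [← hVDUt, ← hUDVt]
      exact hps
    · rw [tr1, tr2]
      rw [hgoal]
      ring
  · -- lower bound
    rintro t ⟨W₁, W₂, hW₁, hW₂, hM, rfl⟩
    have hW₂ps : W₂.PosSemidef := by
      have h := hM.submatrix Sum.inr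
      have heq : (Matrix.fromBlocks W₁ Yᵀ Y W₂).submatrix Sum.inr Sum.inr = W₂ := by
        ext i j; rfl
      rwa [heq] at h
    have hPP : U * Uᵀ * (U * Uᵀ) = U * Uᵀ := by
      rw [Matrix.mul_assoc, ← Matrix.mul_assoc Uᵀ, hUtU, ← Matrix.mul_assoc, hUE]
    have hPsymm : (U * Uᵀ)ᵀ = U * Uᵀ := by
      rw [Matrix.transpose_mul, Matrix.transpose_transpose]
    have hQ : (1 - U * Uᵀ).PosSemidef := by
      have h1 : (1 - U * Uᵀ)ᴴ * (1 - U * Uᵀ) = 1 - U * Uᵀ := by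
        rw [aux_conjTranspose_eq_transpose, Matrix.transpose_sub, Matrix.transpose_one, hPsymm,
          sub_mul, one_mul, mul_sub, mul_one, hPP]
        abel
      have h2 := Matrix.posSemidef_conjTranspose_mul_self (1 - U * Uᵀ)
      rwa [h1] at h2
    have htr2 : (W₂ * (U * Uᵀ)).trace ≤ W₂.trace := by
      have h := aux_trace_mul_nonneg hW₂ps hQ
      rw [mul_sub, mul_one, Matrix.trace_sub] at h
      linarith
    have hcong : ((Matrix.fromCols Vᵀ (-Uᵀ)) * (Matrix.fromBlocks W₁ Yᵀ Y W₂) *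
        (Matrix.fromRows V (-U))).PosSemidef := by
      have h := hM.conjTranspose_mul_mul_same (Matrix.fromRows V (-U))
      rwa [aux_conjTranspose_eq_transpose, Matrix.transpose_fromRows, Matrix.transpose_neg] at h
    have hN : (Matrix.fromCols Vᵀ (-Uᵀ)) * (Matrix.fromBlocks W₁ Yᵀ Y W₂) *
        (Matrix.fromRows V (-U))
        = Vᵀ * W₁ * V - Uᵀ * Y * V - Vᵀ * Yᵀ * U + Uᵀ * W₂ * U := by
      rw [Matrix.fromCols_mul_fromBlocks, Matrix.fromCols_mul_fromRows]
      simp only [Matrix.add_mul, Matrix.neg_mul, Matrix.mul_neg, neg_neg]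
      abel
    have e1 : (Vᵀ * W₁ * V).trace = W₁.trace := by
      rw [Matrix.trace_mul_cycle, hVVt, Matrix.one_mul]
    have e2 : (Vᵀ * Yᵀ * U).trace = ∑ i, σ i := by
      rw [Matrix.mul_assoc, hYtU, ← Matrix.mul_assoc, hVtV, Matrix.one_mul,
        Matrix.trace_diagonal]
    have e3 : (Uᵀ * Y * V).trace = ∑ i, σ i := by
      have h : Uᵀ * Y * V = (Vᵀ * Yᵀ * U)ᵀ := by
        simp [Matrix.transpose_mul, Matrix.mul_assoc]
      rw [h, Matrix.trace_transpose, e2]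
    have e4 : (Uᵀ * W₂ * U).trace = (W₂ * (U * Uᵀ)).trace := by
      rw [Matrix.trace_mul_cycle, Matrix.trace_mul_comm]
    have htrN := aux_trace_nonneg hcong
    rw [hN] at htrN
    rw [Matrix.trace_add, Matrix.trace_sub, Matrix.trace_sub, e1, e2, e3, e4] at htrN
    linarith
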